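/- For every positive integer j and every t ∈ [0,1], the function f_j^μ(t) = √2·cos(jπt) is an eigenfunction of the kernel k^μ(s,t) = min(s,t) − (s+t) + (1/2)(s²+t²) + 1/3 with eigenvalue λ_j^μ = j²π², in the sense that f_j^μ(t) = λ_j^μ · ∫_0^1 k^μ(s,t)·f_j^μ(s) ds. -/

import Mathlib

open Real intervalIntegral

theorem demeaned_wiener_kernel_eigenfunction (j : ℕ) (hj : 0 < j) (t : ℝ)
    (ht : t ∈ Set.Icc (0 : ℝ) 1) :
    Real.sqrt 2 * Real.cos ((j : ℝ) * Real.pi * t) =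
      (j : ℝ) ^ 2 * Real.pi ^ 2 *
        ∫ s in (0 : ℝ)..1,
          (min s t - (s + t) + (1 / 2) * (s ^ 2 + t ^ 2) + 1 / 3) *
            (Real.sqrt 2 * Real.cos ((j : ℝ) * Real.pi * s)) := by
  obtain ⟨ht0, ht1⟩ := ht
  set a : ℝ := (j : ℝ) * Real.pi with ha_def
  set c : ℝ := Real.sqrt 2 with hc_def
  have hπ := Real.pi_pos
  have haj : (0:ℝ) < j := by exact_mod_cast hj
  have ha : 0 < a := mul_pos haj hπ
  have ha' : a ≠ 0 := ne_of_gt ha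
  have hsin1 : Real.sin a = 0 := by
    rw [ha_def]; exact Real.sin_nat_mul_pi j
  have hsin : ∀ s : ℝ, HasDerivAt (fun x => Real.sin (a*x)) (Real.cos (a*s) * a) s := by
    intro s
    exact ((Real.hasDerivAt_sin (a*s)).comp s ((hasDerivAt_id s).const_mul a)).congr_deriv (by ring)
  have hcos : ∀ s : ℝ, HasDerivAt (fun x => Real.cos (a*x)) (-Real.sin (a*s) * a) s := by
    intro s
    exact ((Real.hasDerivAt_cos (a*s)).comp s ((hasDerivAt_id s).const_mul a)).congr_deriv (by ring)
  -- antiderivatives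
  set F1 : ℝ → ℝ := fun s =>
    c * ((s^2/2 + t^2/2 - t + 1/3) * Real.sin (a*s)/a + s * Real.cos (a*s)/a^2
      - Real.sin (a*s)/a^3) with hF1_def
  set F2 : ℝ → ℝ := fun s =>
    c * ((s^2/2 + t^2/2 - s + 1/3) * Real.sin (a*s)/a + (s-1) * Real.cos (a*s)/a^2
      - Real.sin (a*s)/a^3) with hF2_def
  have hF1 : ∀ s : ℝ, HasDerivAt F1
      ((s - (s+t) + (1/2)*(s^2+t^2) + 1/3) * (c * Real.cos (a*s))) s := by
    intro s
    have dp : HasDerivAt (fun x : ℝ => x^2/2 + t^2/2 - t + 1/3) s s := by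
      have h := (((hasDerivAt_pow 2 s).div_const 2).add_const (t^2/2)).sub_const t
      have h2 := h.add_const (1/3)
      refine h2.congr_deriv ?_
      push_cast; ring
    have hA := (dp.mul (hsin s)).div_const a
    have hB := ((hasDerivAt_id s).mul (hcos s)).div_const (a^2)
    have hC := (hsin s).div_const (a^3)
    have h := (((hA.add hB).sub hC).const_mul c)
    refine h.congr_deriv ?_
    simp only [id]
    field_simp
    ring
  have hF2 : ∀ s : ℝ, HasDerivAt F2
      ((t - (s+t) + (1/2)*(s^2+t^2) + 1/3) * (c * Real.cos (a*s))) s := by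
    intro s
    have dp : HasDerivAt (fun x : ℝ => x^2/2 + t^2/2 - x + 1/3) (s - 1) s := by
      have h := ((((hasDerivAt_pow 2 s).div_const 2).add_const (t^2/2)).sub (hasDerivAt_id s)).add_const (1/3)
      refine h.congr_deriv ?_
      push_cast; ring
    have dq : HasDerivAt (fun x : ℝ => x - 1) 1 s := (hasDerivAt_id s).sub_const 1
    have hA := (dp.mul (hsin s)).div_const a
    have hB := (dq.mul (hcos s)).div_const (a^2)
    have hC := (hsin s).div_const (a^3)
    have h := (((hA.add hB).sub hC).const_mul c)
    refine h.congr_deriv ?_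
    field_simp
    ring
  have hcont1 : Continuous fun s : ℝ =>
      (s - (s+t) + (1/2)*(s^2+t^2) + 1/3) * (c * Real.cos (a*s)) := by fun_prop
  have hcont2 : Continuous fun s : ℝ =>
      (t - (s+t) + (1/2)*(s^2+t^2) + 1/3) * (c * Real.cos (a*s)) := by fun_prop
  have hcontm : Continuous fun s : ℝ =>
      (min s t - (s+t) + (1/2)*(s^2+t^2) + 1/3) * (c * Real.cos (a*s)) := by
    apply Continuous.mul
    · exact ((((continuous_id.min continuous_const).sub
        (continuous_id.add continuous_const)).add
        (continuous_const.mul ((continuous_id.pow 2).add continuous_const))).add continuous_const)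
    · fun_prop
  have hsplit : (∫ s in (0:ℝ)..1,
        (min s t - (s + t) + (1 / 2) * (s ^ 2 + t ^ 2) + 1 / 3) * (c * Real.cos (a * s)))
      = (∫ s in (0:ℝ)..t,
        (min s t - (s + t) + (1 / 2) * (s ^ 2 + t ^ 2) + 1 / 3) * (c * Real.cos (a * s)))
      + ∫ s in t..(1:ℝ),
        (min s t - (s + t) + (1 / 2) * (s ^ 2 + t ^ 2) + 1 / 3) * (c * Real.cos (a * s)) := by
    rw [intervalIntegral.integral_add_adjacent_intervals
      (hcontm.intervalIntegrable 0 t) (hcontm.intervalIntegrable t 1)]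
  have heq1 : (∫ s in (0:ℝ)..t,
        (min s t - (s + t) + (1 / 2) * (s ^ 2 + t ^ 2) + 1 / 3) * (c * Real.cos (a * s)))
      = F1 t - F1 0 := by
    rw [show (∫ s in (0:ℝ)..t,
        (min s t - (s + t) + (1 / 2) * (s ^ 2 + t ^ 2) + 1 / 3) * (c * Real.cos (a * s)))
      = ∫ s in (0:ℝ)..t,
        (s - (s + t) + (1 / 2) * (s ^ 2 + t ^ 2) + 1 / 3) * (c * Real.cos (a * s)) from
      intervalIntegral.integral_congr (fun s hs => by
        rw [Set.uIcc_of_le ht0] at hs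
        rw [min_eq_left hs.2])]
    exact intervalIntegral.integral_eq_sub_of_hasDerivAt (fun s _ => hF1 s)
      (hcont1.intervalIntegrable 0 t)
  have heq2 : (∫ s in t..(1:ℝ),
        (min s t - (s + t) + (1 / 2) * (s ^ 2 + t ^ 2) + 1 / 3) * (c * Real.cos (a * s)))
      = F2 1 - F2 t := by
    rw [show (∫ s in t..(1:ℝ),
        (min s t - (s + t) + (1 / 2) * (s ^ 2 + t ^ 2) + 1 / 3) * (c * Real.cos (a * s)))
      = ∫ s in t..(1:ℝ),
        (t - (s + t) + (1 / 2) * (s ^ 2 + t ^ 2) + 1 / 3) * (c * Real.cos (a * s)) from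
      intervalIntegral.integral_congr (fun s hs => by
        rw [Set.uIcc_of_le ht1] at hs
        rw [min_eq_right hs.1])]
    exact intervalIntegral.integral_eq_sub_of_hasDerivAt (fun s _ => hF2 s)
      (hcont2.intervalIntegrable t 1)
  have hval : (∫ s in (0:ℝ)..1,
        (min s t - (s + t) + (1 / 2) * (s ^ 2 + t ^ 2) + 1 / 3) * (c * Real.cos (a * s)))
      = c * Real.cos (a*t) / a^2 := by
    rw [hsplit, heq1, heq2, hF1_def, hF2_def]
    simp only [mul_zero, mul_one, Real.sin_zero, Real.cos_zero, hsin1]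
    field_simp
    ring
  rw [hval]
  have haa : a^2 = (j:ℝ)^2 * Real.pi^2 := by rw [ha_def]; ring
  rw [← haa]
  field_simp
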